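/- Let ν ∈ ℕ₀, n ∈ L_ν, and let κ := |{i ∈ {1,...,ν} : c^{i-1}(n) is odd}|. Then n ≥ σ(n) · 2^ν/6^κ, as an inequality of rational (or real) numbers. -/

import Mathlib

/-- The Collatz function (on ℕ; positive integers are preserved). -/
def c (n : ℕ) : ℕ := if Even n then n / 2 else 3 * n + 1

/-- The level set `L ν`: positive integers whose Collatz orbit first reaches 1 after exactly ν steps. -/
def L (ν : ℕ) : Set ℕ := {n | 0 < n ∧ c^[ν] n = 1 ∧ ∀ i < ν, c^[i] n ≠ 1}

/-- The orbit set `R n = {c^i(n) : i ∈ ℕ₀}`. -/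
def R (n : ℕ) : Set ℕ := {k | ∃ i : ℕ, c^[i] n = k}

/-- The orbit steadiness `σ n = ∏_{k ∈ R(n), k ≡ 4 mod 6} (k-1)/k`, as a real number. -/
noncomputable def σ (n : ℕ) : ℝ := ∏ᶠ k ∈ {k ∈ R n | k % 6 = 4}, ((k : ℝ) - 1) / k

/-- The Collatz tree `𝔠`: positive integers whose orbit reaches 1. -/
def 𝔠 : Set ℕ := ⋃ ν : ℕ, L ν

/-- `σ₀` is the infimum of the orbit steadiness over the Collatz tree. -/
noncomputable def σ₀ : ℝ := sInf (σ '' 𝔠)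

/-- The slot `S ν κ = [σ₀ · 2^ν/6^κ, 2^ν/6^κ]` as a real interval. -/
noncomputable def S (ν κ : ℕ) : Set ℝ := Set.Icc (σ₀ * 2 ^ ν / 6 ^ κ) (2 ^ ν / 6 ^ κ)


lemma c_pos {n : ℕ} (hn : 0 < n) : 0 < c n := by
  unfold c
  split
  · next h => rcases h with ⟨m, hm⟩; omega
  · omega

lemma iter_pos {n : ℕ} (hn : 0 < n) (i : ℕ) : 0 < c^[i] n := by
  induction i with
  | zero => simpa
  | succ k ih => rw [Function.iterate_succ_apply']; exact c_pos ih

lemma c_odd {k : ℕ} (hk : Odd k) : c k = 3 * k + 1 := by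
  unfold c; rw [if_neg (Nat.not_even_iff_odd.mpr hk)]

lemma c_odd_mod {k : ℕ} (hk : Odd k) : c k % 6 = 4 := by
  obtain ⟨m, rfl⟩ := hk
  rw [c_odd ⟨m, rfl⟩]; omega

lemma c_even {k : ℕ} (hk : Even k) : 2 * c k = k := by
  unfold c; rw [if_pos hk]
  obtain ⟨m, rfl⟩ := hk; omega

lemma c3_one : c^[3] 1 = 1 := by decide

lemma iter_one_mod (j : ℕ) : c^[j] 1 = c^[j % 3] 1 := by
  induction j using Nat.strong_induction_on with
  | _ j ih =>
    rcases lt_or_ge j 3 with h | h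
    · rw [Nat.mod_eq_of_lt h]
    · have h1 : j = (j - 3) + 3 := by omega
      have h2 : c^[j] 1 = c^[j - 3] 1 := by
        conv_lhs => rw [h1]
        rw [Function.iterate_add_apply, c3_one]
      rw [h2, ih (j - 3) (by omega)]
      congr 1
      omega

section main
variable {ν n : ℕ} (hn : n ∈ L ν)
include hn

/-- orbit values are distinct up to step ν -/
lemma orbit_inj {i j : ℕ} (hi : i ≤ ν) (hj : j ≤ ν)
    (h : c^[i] n = c^[j] n) : i = j := by
  by_contra hne
  wlog hij : i < j generalizing i j
  · exact this hj hi h.symm (Ne.symm hne) (by omega)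
  have key : c^[ν - (j - i)] n = 1 := by
    have : c^[ν - j] (c^[j] n) = 1 := by
      rw [← Function.iterate_add_apply]
      rw [show ν - j + j = ν by omega]
      exact hn.2.1
    rw [← h, ← Function.iterate_add_apply] at this
    rw [show ν - (j - i) = ν - j + i by omega]
    exact this
  exact hn.2.2 _ (by omega) key

/-- every orbit value is attained at some index < ν + 3 -/
lemma orbit_bounded (i : ℕ) : ∃ j < ν + 3, c^[j] n = c^[i] n := by
  rcases lt_or_ge i (ν + 3) with h | h
  · exact ⟨i, h, rfl⟩
  · have h1 : c^[i] n = c^[i - ν] 1 := by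
      rw [← hn.2.1, ← Function.iterate_add_apply]
      congr 1; omega
    refine ⟨ν + (i - ν) % 3, by omega, ?_⟩
    rw [h1, iter_one_mod]
    rw [← hn.2.1, ← Function.iterate_add_apply]
    congr 1; omega

end main

noncomputable def Fs (ν n : ℕ) : Finset ℕ :=
  ((Finset.range (ν + 3)).image fun i => c^[i] n).filter fun k => k % 6 = 4

lemma set_eq_Fs {ν n : ℕ} (hn : n ∈ L ν) :
    {k ∈ R n | k % 6 = 4} = (Fs ν n : Set ℕ) := by
  ext k
  simp only [Set.mem_setOf_eq, Fs, Finset.coe_filter, Finset.mem_image,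
    Finset.mem_range, Set.mem_setOf_eq]
  constructor
  · rintro ⟨⟨i, rfl⟩, hm⟩
    obtain ⟨j, hj, hje⟩ := orbit_bounded hn i
    exact ⟨⟨j, hj, hje⟩, hm⟩
  · rintro ⟨⟨j, hj, rfl⟩, hm⟩
    exact ⟨⟨j, rfl⟩, hm⟩

lemma sigma_eq {ν n : ℕ} (hn : n ∈ L ν) :
    σ n = ∏ k ∈ Fs ν n, ((k : ℝ) - 1) / k := by
  rw [σ, set_eq_Fs hn, finprod_mem_coe_finset]

/-- telescoping -/
lemma telescope (g : ℕ → ℝ) (hg : ∀ i, g i ≠ 0) (m : ℕ) :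
    ∏ i ∈ Finset.range m, g i / g (i + 1) = g 0 / g m := by
  induction m with
  | zero => simp [div_self (hg 0)]
  | succ k ih =>
    rw [Finset.prod_range_succ, ih, div_mul_div_comm,
      mul_comm (g 0), mul_div_mul_left _ _ (hg k)]

/-- for `n ∈ L ν` with `κ` the number of odd steps, `n ≥ σ(n) · 2^ν/6^κ`. -/
theorem stmt_15 (ν : ℕ) (n : ℕ) (hn : n ∈ L ν)
    (κ : ℕ) (hκ : κ = ((Finset.Icc 1 ν).filter fun i => Odd (c^[i - 1] n)).card) :
    σ n * 2 ^ ν / 6 ^ κ ≤ (n : ℝ) := by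
  set f : ℕ → ℝ := fun k => ((k : ℝ) - 1) / k with hf
  set a : ℕ → ℝ := fun i => (c^[i] n : ℝ) with ha
  have apos : ∀ i, 0 < a i := fun i => by
    simp only [ha]
    exact_mod_cast iter_pos hn.1 i
  have anz : ∀ i, a i ≠ 0 := fun i => (apos i).ne'
  set O : Finset ℕ := (Finset.range ν).filter (fun i => Odd (c^[i] n)) with hO
  -- κ = O.card
  have hκO : κ = O.card := by
    rw [hκ]
    apply Finset.card_nbij' (fun i => i - 1) (fun j => j + 1)
    · intro i hi
      simp only [Finset.mem_coe, Finset.mem_filter, Finset.mem_Icc] at hi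
      simp only [hO, Finset.mem_coe, Finset.mem_filter, Finset.mem_range]
      exact ⟨by omega, hi.2⟩
    · intro j hj
      simp only [hO, Finset.mem_coe, Finset.mem_filter, Finset.mem_range] at hj
      simp only [Finset.mem_coe, Finset.mem_filter, Finset.mem_Icc, Nat.add_sub_cancel]
      exact ⟨⟨by omega, by omega⟩, hj.2⟩
    · intro i hi
      simp only [Finset.mem_coe, Finset.mem_filter, Finset.mem_Icc] at hi
      show i - 1 + 1 = i
      omega
    · intro j _
      show j + 1 - 1 = j
      omega
  have hκν : κ ≤ ν := by
    rw [hκO]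
    exact le_trans (Finset.card_filter_le _ _) (by simp)
  set T : Finset ℕ := O.image (fun i => c^[i+1] n) with hT
  -- T ⊆ Fs
  have hTF : T ⊆ Fs ν n := by
    intro k hk
    simp only [hT, Finset.mem_image, hO, Finset.mem_filter, Finset.mem_range] at hk
    obtain ⟨i, ⟨hi, hodd⟩, rfl⟩ := hk
    simp only [Fs, Finset.mem_filter, Finset.mem_image, Finset.mem_range]
    refine ⟨⟨i + 1, by omega, rfl⟩, ?_⟩
    rw [Function.iterate_succ_apply']
    exact c_odd_mod hodd
  -- telescoping
  have htel : (n : ℝ) = ∏ i ∈ Finset.range ν, a i / a (i + 1) := by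
    rw [telescope a anz ν, ha]
    simp [hn.2.1]
  rw [← Finset.prod_filter_mul_prod_filter_not (Finset.range ν)
    (fun i => Odd (c^[i] n))] at htel
  -- even part
  have heven : ∏ i ∈ (Finset.range ν).filter (fun i => ¬ Odd (c^[i] n)),
      (a i / a (i + 1)) = 2 ^ (ν - κ) := by
    rw [Finset.prod_congr rfl (g := fun _ => (2:ℝ))]
    · rw [Finset.prod_const]
      congr 1
      have := Finset.card_filter_add_card_filter_not
        (s := Finset.range ν) (p := fun i => Odd (c^[i] n))
      rw [hκO, hO]
      simp only [Finset.card_range] at this ⊢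
      omega
    · intro i hi
      simp only [Finset.mem_filter, Nat.not_odd_iff_even] at hi
      have h2 : 2 * c (c^[i] n) = c^[i] n := c_even hi.2
      have : a i = 2 * a (i + 1) := by
        simp only [ha, Function.iterate_succ_apply']
        exact_mod_cast h2.symm
      rw [this, mul_div_assoc, div_self (anz (i+1)), mul_one]
  -- odd part
  have hodds : ∏ i ∈ O, (a i / a (i + 1))
      = (1/3) ^ κ * ∏ k ∈ T, f k := by
    have hstep : ∀ i ∈ O, a i / a (i + 1) = (1/3) * f (c^[i+1] n) := by
      intro i hi
      simp only [hO, Finset.mem_filter, Finset.mem_range] at hi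
      have h3 : c^[i+1] n = 3 * c^[i] n + 1 := by
        rw [Function.iterate_succ_apply', c_odd hi.2]
      have h3' : a (i + 1) = 3 * a i + 1 := by rw [ha]; push_cast [h3]; ring
      simp only [hf]
      have hcast : ((c^[i+1] n : ℕ) : ℝ) = a (i + 1) := rfl
      rw [hcast, h3']
      have := anz i
      have h3nz : (3 : ℝ) * a i + 1 ≠ 0 := by positivity
      field_simp
      ring
    rw [Finset.prod_congr rfl hstep, Finset.prod_mul_distrib, Finset.prod_const,
      hκO, hT, Finset.prod_image]
    intro i hi j hj hij
    simp only [hO, Finset.mem_coe, Finset.mem_filter, Finset.mem_range] at hi hj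
    have := orbit_inj hn (i := i+1) (j := j+1) (by omega) (by omega) hij
    omega
  -- f bounds on Fs
  have hfpos : ∀ k ∈ Fs ν n, 0 < f k := by
    intro k hk
    simp only [Fs, Finset.mem_filter] at hk
    have : 4 ≤ k := by omega
    simp only [hf]
    have : (1:ℝ) ≤ (k:ℝ) - 1 := by
      have : (4:ℝ) ≤ (k:ℝ) := by exact_mod_cast this
      linarith
    positivity
  have hfle : ∀ k ∈ Fs ν n, f k ≤ 1 := by
    intro k hk
    simp only [Fs, Finset.mem_filter] at hk
    have h4 : 4 ≤ k := by omega
    have hk0 : (0:ℝ) < k := by exact_mod_cast (by omega : 0 < k)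
    simp only [hf]
    rw [div_le_one hk0]
    linarith
  have hTpos : (0:ℝ) < ∏ k ∈ T, f k :=
    Finset.prod_pos (fun k hk => hfpos k (hTF hk))
  -- σ n ≤ ∏_T f
  have hσT : σ n ≤ ∏ k ∈ T, f k := by
    rw [sigma_eq hn, ← Finset.prod_sdiff hTF]
    have h1 : ∏ k ∈ Fs ν n \ T, f k ≤ 1 :=
      Finset.prod_le_one
        (fun k hk => (hfpos k (Finset.mem_sdiff.mp hk).1).le)
        (fun k hk => hfle k (Finset.mem_sdiff.mp hk).1)
    calc (∏ k ∈ Fs ν n \ T, f k) * ∏ k ∈ T, f k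
        ≤ 1 * ∏ k ∈ T, f k := by
          exact mul_le_mul_of_nonneg_right h1 hTpos.le
      _ = ∏ k ∈ T, f k := one_mul _
  -- assemble
  have hpow : (2:ℝ) ^ ν / 6 ^ κ = 2 ^ (ν - κ) * (1/3) ^ κ := by
    have : ν = (ν - κ) + κ := by omega
    rw [this, pow_add]
    rw [show (6:ℝ) = 2 * 3 by norm_num, mul_pow]
    field_simp
    rw [Nat.add_sub_cancel, mul_right_comm, ← mul_pow]
    norm_num
  calc σ n * 2 ^ ν / 6 ^ κ
      = σ n * (2 ^ ν / 6 ^ κ) := by ring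
    _ ≤ (∏ k ∈ T, f k) * (2 ^ ν / 6 ^ κ) := by
        apply mul_le_mul_of_nonneg_right hσT
        positivity
    _ = 2 ^ (ν - κ) * ((1/3) ^ κ * ∏ k ∈ T, f k) := by rw [hpow]; ring
    _ = (n : ℝ) := by rw [htel, heven, hodds]; ring
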